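/- Let 1 < l < k be integers and ρ ∈ (0,1) with ρ^{lt} - 2ρ^t + 1 > 0 for a real t > 0. Then the infinite sum ρ^{kt} + (Σ_{r=l}^{k-1} ρ^{rt}) · Σ_{n=0}^∞ (Σ_{s=1}^{l-1} ρ^{st})^n converges and equals (ρ^{lt} - 2ρ^{(k+1)t} + ρ^{(k+l)t})/(1 - 2ρ^t + ρ^{lt}). -/

import Mathlib

theorem stmt13 (ρ t : ℝ) (k l : ℕ) (hl : 1 < l) (hlk : l < k)
    (hρ : ρ ∈ Set.Ioo (0 : ℝ) 1) (ht : 0 < t)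
    (hcond : ρ ^ ((l : ℝ) * t) - 2 * ρ ^ t + 1 > 0) :
    Summable (fun n : ℕ => (∑ s ∈ Finset.Ico 1 l, ρ ^ ((s : ℝ) * t)) ^ n) ∧
    ρ ^ ((k : ℝ) * t) + (∑ r ∈ Finset.Ico l k, ρ ^ ((r : ℝ) * t)) *
        ∑' n : ℕ, (∑ s ∈ Finset.Ico 1 l, ρ ^ ((s : ℝ) * t)) ^ n
      = (ρ ^ ((l : ℝ) * t) - 2 * ρ ^ (((k : ℝ) + 1) * t) + ρ ^ (((k : ℝ) + (l : ℝ)) * t)) /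
          (1 - 2 * ρ ^ t + ρ ^ ((l : ℝ) * t)) := by
  obtain ⟨hρ0, hρ1⟩ := hρ
  set x : ℝ := ρ ^ t with hxdef
  have hx : ∀ n : ℕ, ρ ^ ((n : ℝ) * t) = x ^ n := by
    intro n
    rw [mul_comm, Real.rpow_mul hρ0.le, Real.rpow_natCast]
  have hx0 : 0 < x := Real.rpow_pos_of_pos hρ0 t
  have hx1 : x < 1 := Real.rpow_lt_one hρ0.le hρ1 ht
  have hρt : ρ ^ t = x ^ 1 := by rw [pow_one]
  have hk1 : ((k : ℝ) + 1) * t = ((k + 1 : ℕ) : ℝ) * t := by push_cast; ring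
  have hkl : ((k : ℝ) + (l : ℝ)) * t = ((k + l : ℕ) : ℝ) * t := by push_cast; ring
  simp only [hx, hρt, hk1, hkl]
  have hxne : x ≠ 1 := hx1.ne
  have hx1' : x - 1 ≠ 0 := by intro h; apply hxne; linarith
  set S : ℝ := ∑ s ∈ Finset.Ico 1 l, x ^ s with hSdef
  set M : ℝ := ∑ r ∈ Finset.Ico l k, x ^ r with hMdef
  have keyS : S * (1 - x) = x - x ^ l := by
    rw [hSdef, geom_sum_Ico hxne hl.le]
    field_simp
    ring
  have keyM : M * (1 - x) = x ^ l - x ^ k := by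
    rw [hMdef, geom_sum_Ico hxne hlk.le]
    field_simp
    ring
  have hcond' : x ^ l - 2 * x + 1 > 0 := by
    rw [hx l] at hcond
    linarith
  have hS0 : 0 ≤ S := Finset.sum_nonneg fun i _ => pow_nonneg hx0.le i
  have hS1 : S < 1 := by nlinarith
  have hsum : Summable (fun n : ℕ => S ^ n) := summable_geometric_of_lt_one hS0 hS1
  refine ⟨hsum, ?_⟩
  have hT : ∑' n : ℕ, S ^ n = (1 - S)⁻¹ := tsum_geometric_of_lt_one hS0 hS1
  rw [hT]
  have hSne : 1 - S ≠ 0 := by intro h; nlinarith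
  have hDne : 1 - 2 * x + x ^ l ≠ 0 := by intro h; nlinarith
  have hE : (1 - S) * (1 - x) = 1 - 2 * x + x ^ l := by linear_combination -keyS
  have hinv : (1 - S)⁻¹ = (1 - x) / (1 - 2 * x + x ^ l) := by
    rw [eq_div_iff hDne, ← hE, inv_mul_eq_div, mul_comm, mul_div_assoc,
      div_self hSne, mul_one]
  rw [hinv, eq_div_iff hDne]
  rw [add_mul, mul_assoc, div_mul_cancel₀ _ hDne]
  ring_nf
  linear_combination keyM
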